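/- For each n ≥ 0, the number of irreducible words of length n in {x,y} equals the number of pairs (λ, μ) where λ is a partition into distinct parts, μ is an arbitrary partition, and |λ| + |μ| = n. Explicitly, the map sending (λ=(λ₁>⋯>λ_r), μ=(μ₁≥⋯≥μ_s)) to the word ⋯x^{λ₄}y^{λ₃}x^{λ₂}y^{λ₁}x^{μ₁}y^{μ₂}x^{μ₃}⋯ (alternating blocks, with λ written right-to-left before the μ blocks) is a bijection onto the irreducible words of length n. -/

import Mathlib

/-- Auxiliary function for computing the run-length signature of a word. -/
def sigAux : Bool → ℕ → List Bool → List ℕ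
  | _, k, [] => [k]
  | b, k, a :: rest => if a = b then sigAux b (k + 1) rest else k :: sigAux a 1 rest

/-- The signature of a word: the sequence of lengths of its maximal runs
of a single letter. -/
def signatureW : List Bool → List ℕ
  | [] => []
  | a :: rest => sigAux a 1 rest

/-- A signature `(i₁, …, i_r)` is reducible whenever there is an index `s`
(`2 ≤ s ≤ r−1`, one-based) with `i_{s−1} ≥ i_s < i_{s+1}`; here `t` is the
zero-based index of `i_s`. -/
def ReducibleSig (s : List ℕ) : Prop :=
  ∃ t, 1 ≤ t ∧ t + 1 < s.length ∧ s.getD t 0 ≤ s.getD (t - 1) 0 ∧ s.getD t 0 < s.getD (t + 1) 0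

/-- A word is irreducible whenever its signature is not reducible. -/
def IrredWord (w : List Bool) : Prop := ¬ ReducibleSig (signatureW w)

/-- The word with alternating blocks of the given lengths, starting with the given
letter (`true` = `x`, `false` = `y`). -/
def altWord : Bool → List ℕ → List Bool
  | _, [] => []
  | b, a :: rest => List.replicate a b ++ altWord (!b) rest

/-- The set `Y_n` of pairs `(λ, μ)` with `λ` a partition into mutually distinct parts,
`μ` an arbitrary partition, and `|λ| + |μ| = n` (partitions as weakly decreasing lists
of positive integers, `λ` strictly decreasing). -/
def Yset (n : ℕ) : Set (List ℕ × List ℕ) :=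
  {p | p.1.Pairwise (· > ·) ∧ (∀ a ∈ p.1, 0 < a) ∧
       p.2.Pairwise (· ≥ ·) ∧ (∀ a ∈ p.2, 0 < a) ∧ p.1.sum + p.2.sum = n}

/-- The set of irreducible words of length `n`. -/
def Wset (n : ℕ) : Set (List Bool) := {w | w.length = n ∧ IrredWord w}

/-- The map sending `(λ = (λ₁ > ⋯ > λ_r), μ = (μ₁ ≥ ⋯ ≥ μ_s))` to the word
`⋯x^{λ₄}y^{λ₃}x^{λ₂}y^{λ₁}x^{μ₁}y^{μ₂}x^{μ₃}⋯` (alternating blocks, the `λ` blocks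
written right-to-left before the `μ` blocks, the `λ₁` block being a `y`-block and the
`μ₁` block an `x`-block). -/
def lamMuWord (p : List ℕ × List ℕ) : List Bool :=
  altWord (decide (p.1.length % 2 = 0)) (p.1.reverse ++ p.2)

/-! ### Auxiliary lemmas on `sigAux` and `altWord` -/

lemma sigAux_cons_same (b : Bool) (k : ℕ) (rest : List Bool) :
    sigAux b k (b :: rest) = sigAux b (k + 1) rest := by
  simp [sigAux]

lemma sigAux_cons_ne {a b : Bool} (h : a ≠ b) (k : ℕ) (rest : List Bool) :
    sigAux b k (a :: rest) = k :: sigAux a 1 rest := by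
  simp [sigAux, h]

lemma sigAux_replicate (a : ℕ) : ∀ (b : Bool) (k : ℕ) (rest : List Bool),
    sigAux b k (List.replicate a b ++ rest) = sigAux b (k + a) rest := by
  induction a with
  | zero => intro b k rest; simp
  | succ m ih =>
    intro b k rest
    rw [List.replicate_succ, List.cons_append, sigAux_cons_same, ih b (k + 1) rest,
      show k + 1 + m = k + (m + 1) by omega]

lemma altWord_sigAux : ∀ (rest : List Bool) (b : Bool) (k : ℕ),
    altWord b (sigAux b k rest) = List.replicate k b ++ rest := by
  intro rest
  induction rest with
  | nil => intro b k; simp [sigAux, altWord]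
  | cons a r ih =>
    intro b k
    by_cases h : a = b
    · subst h
      rw [sigAux_cons_same, ih a (k + 1), List.replicate_succ', List.append_assoc]
      rfl
    · rw [sigAux_cons_ne h]
      show List.replicate k b ++ altWord (!b) (sigAux a 1 r) = _
      have hb : (!b) = a := by cases a <;> cases b <;> simp_all
      rw [hb, ih a 1]
      simp

lemma sigAux_pos : ∀ (rest : List Bool) (b : Bool) (k : ℕ), 0 < k →
    ∀ x ∈ sigAux b k rest, 0 < x := by
  intro rest
  induction rest with
  | nil => intro b k hk x hx; simp [sigAux] at hx; omega
  | cons a r ih =>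
    intro b k hk x hx
    by_cases h : a = b
    · subst h
      rw [sigAux_cons_same] at hx
      exact ih a (k + 1) (by omega) x hx
    · rw [sigAux_cons_ne h, List.mem_cons] at hx
      rcases hx with rfl | hx
      · exact hk
      · exact ih a 1 one_pos x hx

lemma sigAux_sum : ∀ (rest : List Bool) (b : Bool) (k : ℕ),
    (sigAux b k rest).sum = k + rest.length := by
  intro rest
  induction rest with
  | nil => intro b k; simp [sigAux]
  | cons a r ih =>
    intro b k
    by_cases h : a = b
    · subst h
      rw [sigAux_cons_same, ih a (k + 1)]
      simp; omega
    · rw [sigAux_cons_ne h, List.sum_cons, ih a 1]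
      simp; omega

lemma sigAux_ne_nil : ∀ (rest : List Bool) (b : Bool) (k : ℕ), sigAux b k rest ≠ [] := by
  intro rest
  induction rest with
  | nil => intro b k; simp [sigAux]
  | cons a r ih =>
    intro b k
    by_cases h : a = b
    · subst h; rw [sigAux_cons_same]; exact ih a (k + 1)
    · rw [sigAux_cons_ne h]; simp

lemma sigAux_alt : ∀ (L : List ℕ) (b : Bool) (k : ℕ), (∀ x ∈ L, 0 < x) →
    sigAux b k (altWord (!b) L) = k :: L := by
  intro L
  induction L with
  | nil => intro b k _; simp [altWord, sigAux]
  | cons a r ih =>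
    intro b k hpos
    have ha : 0 < a := hpos a (by simp)
    obtain ⟨m, rfl⟩ : ∃ m, a = m + 1 := ⟨a - 1, by omega⟩
    show sigAux b k (List.replicate (m + 1) (!b) ++ altWord (!(!b)) r) = _
    rw [List.replicate_succ, List.cons_append]
    have hne : (!b) ≠ b := by cases b <;> simp
    rw [sigAux_cons_ne hne, sigAux_replicate, Bool.not_not,
      show (1 : ℕ) + m = m + 1 by omega]
    have := ih (!b) (m + 1) (fun x hx => hpos x (by simp [hx]))
    rw [Bool.not_not] at this
    rw [this]

lemma signatureW_altWord (b : Bool) (L : List ℕ) (hL : ∀ x ∈ L, 0 < x) :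
    signatureW (altWord b L) = L := by
  cases L with
  | nil => rfl
  | cons a r =>
    have ha : 0 < a := hL a (by simp)
    obtain ⟨m, rfl⟩ : ∃ m, a = m + 1 := ⟨a - 1, by omega⟩
    show signatureW (List.replicate (m + 1) b ++ altWord (!b) r) = _
    rw [List.replicate_succ, List.cons_append]
    show sigAux b 1 (List.replicate m b ++ altWord (!b) r) = _
    rw [sigAux_replicate, show (1 : ℕ) + m = m + 1 by omega]
    exact sigAux_alt r b (m + 1) (fun x hx => hL x (by simp [hx]))

lemma altWord_length : ∀ (L : List ℕ) (b : Bool), (altWord b L).length = L.sum := by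
  intro L
  induction L with
  | nil => intro b; rfl
  | cons a r ih => intro b; simp [altWord, ih]

lemma altWord_head (b : Bool) (a : ℕ) (r : List ℕ) (ha : 0 < a) :
    (altWord b (a :: r)).head? = some b := by
  obtain ⟨m, rfl⟩ : ∃ m, a = m + 1 := ⟨a - 1, by omega⟩
  show (List.replicate (m + 1) b ++ altWord (!b) r).head? = some b
  rw [List.replicate_succ, List.cons_append]
  rfl

/-! ### getD helpers -/

lemma getD_append_left' {L M : List ℕ} {i : ℕ} (h : i < L.length) :
    (L ++ M).getD i 0 = L.getD i 0 := by
  rw [List.getD_eq_getElem (L ++ M) 0 (by simp; omega), List.getD_eq_getElem L 0 h]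
  exact List.getElem_append_left h

lemma getD_append_right' {L M : List ℕ} {i : ℕ} (hL : L.length ≤ i)
    (h : i < L.length + M.length) :
    (L ++ M).getD i 0 = M.getD (i - L.length) 0 := by
  rw [List.getD_eq_getElem (L ++ M) 0 (by simp; omega),
    List.getD_eq_getElem M 0 (by omega)]
  exact List.getElem_append_right hL

lemma getD_take' {s : List ℕ} {k i : ℕ} (h : i < k) (h2 : i < s.length) :
    (s.take k).getD i 0 = s.getD i 0 := by
  rw [List.getD_eq_getElem (s.take k) 0 (by rw [List.length_take]; omega),
    List.getD_eq_getElem s 0 h2]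
  exact List.getElem_take

lemma getD_drop' {s : List ℕ} {k i : ℕ} (h : k + i < s.length) :
    (s.drop k).getD i 0 = s.getD (k + i) 0 := by
  rw [List.getD_eq_getElem (s.drop k) 0 (by rw [List.length_drop]; omega),
    List.getD_eq_getElem s 0 h]
  exact List.getElem_drop

/-! ### Splits of signatures -/

/-- `k` is a good split point of `s`: the prefix of length `k` is strictly increasing
and the suffix is weakly decreasing. -/
def GoodSplit (s : List ℕ) (k : ℕ) : Prop :=
  k ≤ s.length ∧ (∀ i, i + 1 < k → s.getD i 0 < s.getD (i + 1) 0) ∧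
    (∀ i, k ≤ i → i + 1 < s.length → s.getD (i + 1) 0 ≤ s.getD i 0)

lemma chain'_iff_getD {R : ℕ → ℕ → Prop} {l : List ℕ} :
    l.IsChain R ↔ ∀ i, i + 1 < l.length → R (l.getD i 0) (l.getD (i + 1) 0) := by
  rw [List.isChain_iff_getElem]
  constructor
  · intro h i hi
    rw [List.getD_eq_getElem l 0 (by omega), List.getD_eq_getElem l 0 hi]
    have := h i (by omega)
    simpa using this
  · intro h i hi
    have := h i (by omega)
    rw [List.getD_eq_getElem l 0 (by omega), List.getD_eq_getElem l 0 (by omega)] at this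
    simpa using this

lemma goodSplit_append {L M : List ℕ} (hL : L.Pairwise (· < ·)) (hM : M.Pairwise (· ≥ ·)) :
    GoodSplit (L ++ M) L.length := by
  refine ⟨by simp, ?_, ?_⟩
  · intro i hi
    have hc : L.IsChain (· < ·) := List.isChain_iff_pairwise.mpr hL
    have h1 := chain'_iff_getD.mp hc i hi
    rw [getD_append_left' (by omega), getD_append_left' (by omega)]
    exact h1
  · intro i hik hilen
    have hlen : i + 1 < L.length + M.length := by simpa using hilen
    have hc : M.IsChain (· ≥ ·) := List.isChain_iff_pairwise.mpr hM
    have h1 := chain'_iff_getD.mp hc (i - L.length) (by omega)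
    rw [getD_append_right' (by omega) (by omega), getD_append_right' (by omega) (by omega),
      show i + 1 - L.length = (i - L.length) + 1 by omega]
    exact h1

lemma sorted_take_of_goodSplit {s : List ℕ} {k : ℕ} (h : GoodSplit s k) :
    (s.take k).Pairwise (· < ·) := by
  obtain ⟨hk, hinc, _⟩ := h
  refine List.isChain_iff_pairwise.mp (chain'_iff_getD.mpr ?_)
  intro i hi
  rw [List.length_take] at hi
  rw [getD_take' (by omega) (by omega), getD_take' (by omega) (by omega)]
  exact hinc i (by omega)

lemma sorted_drop_of_goodSplit {s : List ℕ} {k : ℕ} (h : GoodSplit s k) :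
    (s.drop k).Pairwise (· ≥ ·) := by
  obtain ⟨hk, _, hdec⟩ := h
  refine List.isChain_iff_pairwise.mp (chain'_iff_getD.mpr ?_)
  intro i hi
  rw [List.length_drop] at hi
  rw [getD_drop' (by omega), getD_drop' (by omega),
    show k + (i + 1) = (k + i) + 1 by omega]
  exact hdec (k + i) (by omega) (by omega)

lemma not_reducibleSig_of_goodSplit {s : List ℕ} {k : ℕ} (h : GoodSplit s k) :
    ¬ ReducibleSig s := by
  rintro ⟨t, ht1, ht2, hle, hlt⟩
  obtain ⟨hk, hinc, hdec⟩ := h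
  by_cases hc : t < k
  · have h1 := hinc (t - 1) (by omega)
    rw [show t - 1 + 1 = t by omega] at h1
    omega
  · have h1 := hdec t (by omega) ht2
    omega

lemma exists_goodSplit {s : List ℕ} (hs : s ≠ []) (h : ¬ ReducibleSig s) :
    ∃ m, GoodSplit s m ∧ GoodSplit s (m + 1) := by
  have hlen : 0 < s.length := List.length_pos_iff.mpr hs
  by_cases hex : ∃ j, j + 1 < s.length ∧ s.getD (j + 1) 0 ≤ s.getD j 0
  · classical
    obtain ⟨hj₀len, hj₀le⟩ := Nat.find_spec hex
    set j₀ := Nat.find hex with hj₀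
    have hinc : ∀ i, i < j₀ → s.getD i 0 < s.getD (i + 1) 0 := by
      intro i hi
      have h1 := Nat.find_min hex hi
      have h2 : i + 1 < s.length := by omega
      by_contra hcon
      exact h1 ⟨h2, by omega⟩
    have hdec : ∀ i, j₀ ≤ i → i + 1 < s.length → s.getD (i + 1) 0 ≤ s.getD i 0 := by
      intro i
      induction i with
      | zero =>
        intro h0 h1
        have he : j₀ = 0 := by omega
        rw [he] at hj₀le
        exact hj₀le
      | succ i ih =>
        intro hji hilen
        by_cases hcase : j₀ = i + 1
        · rw [hcase] at hj₀le; exact hj₀le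
        · have hji' : j₀ ≤ i := by omega
          have hprev : s.getD (i + 1) 0 ≤ s.getD i 0 := ih hji' (by omega)
          by_contra hcon
          refine h ⟨i + 1, by omega, hilen, ?_, by omega⟩
          simpa using hprev
    exact ⟨j₀, ⟨by omega, fun i hi => hinc i (by omega), hdec⟩,
      ⟨by omega, fun i hi => hinc i (by omega), fun i hi hl => hdec i (by omega) hl⟩⟩
  · push_neg at hex
    have hinc : ∀ i, i + 1 < s.length → s.getD i 0 < s.getD (i + 1) 0 := by
      intro i hi
      have := hex i hi
      omega
    exact ⟨s.length - 1, ⟨by omega, fun i hi => hinc i (by omega),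
      fun i hi hl => by omega⟩, ⟨by omega, fun i hi => hinc i (by omega),
      fun i hi hl => by omega⟩⟩

lemma goodSplit_close {s : List ℕ} {k k' : ℕ} (h : GoodSplit s k) (h' : GoodSplit s k') :
    k ≤ k' + 1 := by
  by_contra hc
  push_neg at hc
  have hsl := h.1
  have h1 := h.2.1 k' (by omega)
  have h2 := h'.2.2 k' le_rfl (by omega)
  omega

/-! ### The main theorem -/

lemma lamMuWord_sig {l m : List ℕ} (hl : ∀ a ∈ l, 0 < a) (hm : ∀ a ∈ m, 0 < a) :
    signatureW (lamMuWord (l, m)) = l.reverse ++ m := by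
  apply signatureW_altWord
  intro x hx
  rcases List.mem_append.mp hx with hx | hx
  · exact hl x (List.mem_reverse.mp hx)
  · exact hm x hx

theorem stmt13 (n : ℕ) :
    Set.BijOn lamMuWord (Yset n) (Wset n) ∧
      Nat.card (Wset n) = Nat.card (Yset n) := by
  have hbij : Set.BijOn lamMuWord (Yset n) (Wset n) := by
    refine ⟨?_, ?_, ?_⟩
    · -- MapsTo
      rintro ⟨l, m⟩ ⟨hl, hlpos, hm, hmpos, hsum⟩
      have hLsorted : (l.reverse).Pairwise (· < ·) := List.pairwise_reverse.mpr hl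
      have hgs : GoodSplit (l.reverse ++ m) l.reverse.length := goodSplit_append hLsorted hm
      refine ⟨?_, ?_⟩
      · show (lamMuWord (l, m)).length = n
        rw [lamMuWord, altWord_length]
        simp only [List.sum_append, List.sum_reverse]
        exact hsum
      · show ¬ ReducibleSig (signatureW (lamMuWord (l, m)))
        rw [lamMuWord_sig hlpos hmpos]
        exact not_reducibleSig_of_goodSplit hgs
    · -- InjOn
      rintro ⟨l1, m1⟩ ⟨hl1, hl1pos, hm1, hm1pos, hsum1⟩
        ⟨l2, m2⟩ ⟨hl2, hl2pos, hm2, hm2pos, hsum2⟩ heq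
      have hsig : l1.reverse ++ m1 = l2.reverse ++ m2 := by
        rw [← lamMuWord_sig hl1pos hm1pos, ← lamMuWord_sig hl2pos hm2pos, heq]
      by_cases hnil : l1.reverse ++ m1 = []
      · have hnil2 : l2.reverse ++ m2 = [] := by rw [← hsig]; exact hnil
        rw [List.append_eq_nil_iff] at hnil hnil2
        have e1 : l1 = [] := by simpa using hnil.1
        have e2 : l2 = [] := by simpa using hnil2.1
        simp [Prod.ext_iff, e1, e2, hnil.2, hnil2.2]
      · obtain ⟨a, rest, hcons⟩ := List.exists_cons_of_ne_nil hnil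
        have hapos : 0 < a := by
          have hmem : a ∈ l1.reverse ++ m1 := by rw [hcons]; simp
          rcases List.mem_append.mp hmem with hx | hx
          · exact hl1pos a (List.mem_reverse.mp hx)
          · exact hm1pos a hx
        have hhead1 : (lamMuWord (l1, m1)).head? = some (decide (l1.length % 2 = 0)) := by
          show (altWord _ (l1.reverse ++ m1)).head? = _
          rw [hcons]
          exact altWord_head _ a rest hapos
        have hhead2 : (lamMuWord (l2, m2)).head? = some (decide (l2.length % 2 = 0)) := by
          show (altWord _ (l2.reverse ++ m2)).head? = _
          rw [← hsig, hcons]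
          exact altWord_head _ a rest hapos
        have hsome : some (decide (l1.length % 2 = 0)) = some (decide (l2.length % 2 = 0)) := by
          rw [← hhead1, ← hhead2, heq]
        have hb : decide (l1.length % 2 = 0) = decide (l2.length % 2 = 0) :=
          Option.some.inj hsome
        have hpar : (l1.length % 2 = 0) ↔ (l2.length % 2 = 0) := decide_eq_decide.mp hb
        have hgs1 : GoodSplit (l1.reverse ++ m1) l1.reverse.length :=
          goodSplit_append (List.pairwise_reverse.mpr hl1) hm1
        have hgs2 : GoodSplit (l1.reverse ++ m1) l2.reverse.length := by
          rw [hsig]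
          exact goodSplit_append (List.pairwise_reverse.mpr hl2) hm2
        have hc1 := goodSplit_close hgs1 hgs2
        have hc2 := goodSplit_close hgs2 hgs1
        simp only [List.length_reverse] at hc1 hc2
        have hkeq : l1.reverse.length = l2.reverse.length := by
          rw [List.length_reverse, List.length_reverse]
          omega
        obtain ⟨hrev, hmm⟩ := List.append_inj hsig hkeq
        have hll : l1 = l2 := List.reverse_injective hrev
        rw [Prod.mk.injEq]
        exact ⟨hll, hmm⟩
    · -- SurjOn
      intro w hw
      obtain ⟨hwlen, hirr⟩ := hw
      cases w with
      | nil =>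
        refine ⟨([], []), ?_, rfl⟩
        have : n = 0 := by simpa using hwlen.symm
        subst this
        exact ⟨List.Pairwise.nil, by simp, List.Pairwise.nil, by simp, by simp⟩
      | cons b t =>
        set s : List ℕ := sigAux b 1 t with hs
        have hsne : s ≠ [] := sigAux_ne_nil t b 1
        have hpos : ∀ x ∈ s, 0 < x := sigAux_pos t b 1 one_pos
        have hsum : s.sum = n := by
          rw [hs, sigAux_sum]
          have := hwlen
          simp at this
          omega
        have hrec : altWord b s = b :: t := by
          rw [hs, altWord_sigAux]
          rfl
        have hirr' : ¬ ReducibleSig s := hirr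
        obtain ⟨m, hm, hm1⟩ := exists_goodSplit hsne hirr'
        obtain ⟨k, hk, hkb⟩ : ∃ k, GoodSplit s k ∧ decide (k % 2 = 0) = b := by
          cases b
          · rcases Nat.mod_two_eq_zero_or_one m with h2 | h2
            · exact ⟨m + 1, hm1, by simp [show (m + 1) % 2 = 1 by omega]⟩
            · exact ⟨m, hm, by simp [h2]⟩
          · rcases Nat.mod_two_eq_zero_or_one m with h2 | h2
            · exact ⟨m, hm, by simp [h2]⟩
            · exact ⟨m + 1, hm1, by simp [show (m + 1) % 2 = 0 by omega]⟩
        refine ⟨((s.take k).reverse, s.drop k), ?_, ?_⟩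
        · refine ⟨?_, ?_, sorted_drop_of_goodSplit hk, ?_, ?_⟩
          · exact List.pairwise_reverse.mpr (sorted_take_of_goodSplit hk)
          · intro x hx
            exact hpos x (List.take_subset _ _ (List.mem_reverse.mp hx))
          · intro x hx
            exact hpos x (List.drop_subset _ _ hx)
          · rw [List.sum_reverse, List.sum_take_add_sum_drop, hsum]
        · show altWord _ ((s.take k).reverse.reverse ++ s.drop k) = _
          have hlenk : (s.take k).reverse.length = k := by
            rw [List.length_reverse, List.length_take]
            have := hk.1
            omega
          rw [List.reverse_reverse, List.take_append_drop, hlenk, hkb, hrec]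
  exact ⟨hbij, Nat.card_congr (hbij.equiv lamMuWord).symm⟩
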